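/- If a sequence of probability density functions on ℝ^d is uniformly equicontinuous and uniformly bounded, and the corresponding probability measures converge weakly to a probability measure μ, then the measures converge to μ in total variation. -/

import Mathlib

open MeasureTheory Filter Topology BoundedContinuousFunction
open Metric
open scoped ENNReal NNReal

lemma integral_wd {X : Type*} [MeasurableSpace X] {μ : Measure X}
    {p : X → ℝ} (hp : Measurable p) (hp0 : ∀ x, 0 ≤ p x) (φ : X → ℝ) :
    ∫ x, φ x ∂(μ.withDensity (fun x => ENNReal.ofReal (p x))) = ∫ x, p x * φ x ∂μ := by
  have h : (fun x => ENNReal.ofReal (p x)) = fun x => ((p x).toNNReal : ℝ≥0∞) := rfl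
  rw [h, integral_withDensity_eq_integral_smul hp.real_toNNReal]
  refine integral_congr_ae (Eventually.of_forall fun x => ?_)
  simp [NNReal.smul_def, Real.coe_toNNReal _ (hp0 x)]

lemma bump_close {d : ℕ} {p : EuclideanSpace ℝ (Fin d) → ℝ}
    (hint : Integrable p) {x : EuclideanSpace ℝ (Fin d)} {δ ε : ℝ}
    (hδ : 0 < δ) (hε : 0 ≤ ε)
    (hnear : ∀ y, dist y x < δ → |p y - p x| ≤ ε)
    (b : ContDiffBump x) (hb : b.rOut = δ) :
    |(∫ y, p y * b.normed volume y) - p x| ≤ ε := by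
  set φ : EuclideanSpace ℝ (Fin d) → ℝ := b.normed volume with hφ
  have φcont : Continuous φ := b.continuous_normed
  have φint : Integrable φ := b.integrable_normed
  have φnn : ∀ y, 0 ≤ φ y := b.nonneg_normed
  obtain ⟨B, hB⟩ := b.hasCompactSupport_normed.exists_bound_of_continuous φcont
  have hpφ : Integrable (fun y => p y * φ y) := by
    have := hint.bdd_mul (c := B) φcont.aestronglyMeasurable
      (Eventually.of_forall fun y => hB y)
    simpa [mul_comm] using this
  have hconst : Integrable (fun y => p x * φ y) := φint.const_mul _
  have hφ1 : ∫ y, φ y = 1 := b.integral_normed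
  have h1 : (∫ y, p y * φ y) - p x = ∫ y, (p y - p x) * φ y := by
    calc (∫ y, p y * φ y) - p x = (∫ y, p y * φ y) - ∫ y, p x * φ y := by
          rw [integral_const_mul, hφ1, mul_one]
      _ = ∫ y, (p y * φ y - p x * φ y) := (integral_sub hpφ hconst).symm
      _ = ∫ y, (p y - p x) * φ y := by congr 1 with y; ring
  rw [show (∫ y, p y * b.normed volume y) - p x = (∫ y, p y * φ y) - p x from rfl, h1]
  have hbd : ∀ y, ‖(p y - p x) * φ y‖ ≤ ε * φ y := by
    intro y
    rcases eq_or_lt_of_le (φnn y) with h0 | h0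
    · simp [← h0]
    · have hy : y ∈ Function.support φ := by
        simp only [Function.mem_support]; exact ne_of_gt h0
      rw [b.support_normed_eq] at hy
      have hyd : dist y x < δ := by rw [← hb]; exact mem_ball.mp hy
      rw [norm_mul, Real.norm_eq_abs, Real.norm_eq_abs, abs_of_nonneg (φnn y)]
      exact mul_le_mul_of_nonneg_right (hnear y hyd) (φnn y)
  have hnorm := norm_integral_le_of_norm_le ((φint.const_mul ε)) (Eventually.of_forall hbd)
  rw [integral_const_mul, hφ1, mul_one] at hnorm
  simpa using hnorm


/-- Total variation distance: `2 sup_B |μ(B) − ν(B)|`. -/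
noncomputable def dTV {X : Type*} [MeasurableSpace X] (μ ν : Measure X) : ℝ :=
  2 * ⨆ B : Set X, |(μ B).toReal - (ν B).toReal|

/-- If a uniformly bounded, uniformly equicontinuous sequence of probability densities on ℝ^d
induces measures converging weakly to a probability measure μ, then they converge to μ
in total variation. -/
theorem scheffe_equicontinuous_weak_to_tv
    (d : ℕ) (f : ℕ → EuclideanSpace ℝ (Fin d) → ℝ)
    (hmeas : ∀ n, Measurable (f n))
    (hnonneg : ∀ n x, 0 ≤ f n x)
    (hprob : ∀ n, ∫ x, f n x = 1)
    (hbdd : ∃ C : ℝ, ∀ n x, f n x ≤ C)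
    (hequi : Equicontinuous f)
    (μ : Measure (EuclideanSpace ℝ (Fin d))) [IsProbabilityMeasure μ]
    (hweak : ∀ g : EuclideanSpace ℝ (Fin d) →ᵇ ℝ,
      Tendsto (fun n => ∫ x, g x ∂(volume.withDensity (fun x => ENNReal.ofReal (f n x))))
        atTop (𝓝 (∫ x, g x ∂μ))) :
    Tendsto (fun n => dTV (volume.withDensity (fun x => ENNReal.ofReal (f n x))) μ)
      atTop (𝓝 0) := by
  classical
  obtain ⟨C, hC⟩ := hbdd
  have hfint : ∀ n, Integrable (f n) := fun n => integrable_of_integral_eq_one (hprob n)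
  set μn : ℕ → Measure (EuclideanSpace ℝ (Fin d)) :=
    fun n => volume.withDensity (fun x => ENNReal.ofReal (f n x)) with hμn
  have hIwd : ∀ n (φ : EuclideanSpace ℝ (Fin d) → ℝ),
      ∫ x, φ x ∂(μn n) = ∫ x, f n x * φ x := fun n φ => integral_wd (hmeas n) (hnonneg n) φ
  have hW : ∀ φ : EuclideanSpace ℝ (Fin d) →ᵇ ℝ,
      Tendsto (fun n => ∫ x, f n x * φ x) atTop (𝓝 (∫ x, φ x ∂μ)) := by
    intro φ
    have h : Tendsto (fun n => ∫ x, φ x ∂(μn n)) atTop (𝓝 (∫ x, φ x ∂μ)) := hweak φ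
    simpa only [hIwd] using h
  -- pointwise limit
  have hcauchy : ∀ x, ∃ L, Tendsto (fun n => f n x) atTop (𝓝 L) := by
    intro x
    have hcs : CauchySeq (fun n => f n x) := by
      rw [Metric.cauchySeq_iff]
      intro ε hε
      obtain ⟨δ, hδpos, hδ⟩ := (Metric.equicontinuousAt_iff.mp (hequi x)) (ε/4) (by linarith)
      set b : ContDiffBump x := ⟨δ/2, δ, by positivity, by linarith⟩ with hbdef
      set φ : EuclideanSpace ℝ (Fin d) → ℝ := b.normed volume with hφdef
      have φcont : Continuous φ := b.continuous_normed
      have φcs : HasCompactSupport φ := b.hasCompactSupport_normed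
      obtain ⟨B, hB⟩ := φcs.exists_bound_of_continuous φcont
      set φb : EuclideanSpace ℝ (Fin d) →ᵇ ℝ :=
        BoundedContinuousFunction.ofNormedAddCommGroup φ φcont B hB with hφbdef
      have hT := hW φb
      have hTc : CauchySeq (fun n => ∫ y, f n y * φb y) := hT.cauchySeq
      rw [Metric.cauchySeq_iff] at hTc
      obtain ⟨N, hN⟩ := hTc (ε/4) (by linarith)
      refine ⟨N, fun m hm n hn => ?_⟩
      have hest : ∀ k, |(∫ y, f k y * φ y) - f k x| ≤ ε/4 := by
        intro k
        refine bump_close (hfint k) hδpos (by linarith) (fun y hy => ?_) b rfl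
        have h2 := hδ y hy k
        rw [Real.dist_eq] at h2
        calc |f k y - f k x| = |f k x - f k y| := abs_sub_comm _ _
          _ ≤ ε/4 := h2.le
      have h1 : dist (f m x) (∫ y, f m y * φ y) ≤ ε/4 := by
        rw [Real.dist_eq, abs_sub_comm]; exact hest m
      have h2 : dist (∫ y, f n y * φ y) (f n x) ≤ ε/4 := by
        rw [Real.dist_eq]; exact hest n
      have h3 : dist (∫ y, f m y * φ y) (∫ y, f n y * φ y) < ε/4 := hN m hm n hn
      have h4 := dist_triangle4 (f m x) (∫ y, f m y * φ y) (∫ y, f n y * φ y) (f n x)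
      linarith
    exact cauchySeq_tendsto_of_complete hcs
  choose g hg using hcauchy
  have hgm : Measurable g :=
    measurable_of_tendsto_metrizable (fun n => hmeas n) (tendsto_pi_nhds.mpr hg)
  have hg0 : ∀ x, 0 ≤ g x := fun x => ge_of_tendsto' (hg x) (fun n => hnonneg n x)
  have hlint_n : ∀ n, ∫⁻ x, ENNReal.ofReal (f n x) = 1 := by
    intro n
    rw [← ofReal_integral_eq_lintegral_ofReal (hfint n) (Eventually.of_forall (hnonneg n)),
      hprob n, ENNReal.ofReal_one]
  have hlg_le : ∫⁻ x, ENNReal.ofReal (g x) ≤ 1 := by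
    have hlim : ∀ x, Tendsto (fun n => ENNReal.ofReal (f n x)) atTop
        (𝓝 (ENNReal.ofReal (g x))) :=
      fun x => (ENNReal.continuous_ofReal.tendsto _).comp (hg x)
    calc ∫⁻ x, ENNReal.ofReal (g x)
        = ∫⁻ x, liminf (fun n => ENNReal.ofReal (f n x)) atTop :=
          lintegral_congr fun x => ((hlim x).liminf_eq).symm
      _ ≤ liminf (fun n => ∫⁻ x, ENNReal.ofReal (f n x)) atTop :=
          lintegral_liminf_le (fun n => (hmeas n).ennreal_ofReal)
      _ = 1 := by simp only [hlint_n]; exact liminf_const 1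
  have hgint : Integrable g := by
    refine ⟨hgm.aestronglyMeasurable, ?_⟩
    rw [hasFiniteIntegral_iff_norm]
    calc ∫⁻ x, ENNReal.ofReal ‖g x‖
        = ∫⁻ x, ENNReal.ofReal (g x) :=
          lintegral_congr fun x => by rw [Real.norm_eq_abs, abs_of_nonneg (hg0 x)]
      _ ≤ 1 := hlg_le
      _ < ⊤ := ENNReal.one_lt_top
  set ν : Measure (EuclideanSpace ℝ (Fin d)) :=
    volume.withDensity (fun x => ENNReal.ofReal (g x)) with hνdef
  haveI hνfin : IsFiniteMeasure ν := by
    refine isFiniteMeasure_withDensity ?_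
    exact (lt_of_le_of_lt hlg_le ENNReal.one_lt_top).ne
  -- integrals against compactly supported continuous functions agree
  have hCc : ∀ φ : EuclideanSpace ℝ (Fin d) → ℝ, Continuous φ → HasCompactSupport φ →
      ∫ x, φ x ∂ν = ∫ x, φ x ∂μ := by
    intro φ φcont φcs
    obtain ⟨B, hB⟩ := φcs.exists_bound_of_continuous φcont
    have hφint : Integrable φ := φcont.integrable_of_hasCompactSupport φcs
    set φb : EuclideanSpace ℝ (Fin d) →ᵇ ℝ :=
      BoundedContinuousFunction.ofNormedAddCommGroup φ φcont B hB with hφbdef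
    have T2 : Tendsto (fun n => ∫ x, f n x * φ x) atTop (𝓝 (∫ x, φ x ∂μ)) := hW φb
    have T1 : Tendsto (fun n => ∫ x, f n x * φ x) atTop (𝓝 (∫ x, g x * φ x)) := by
      refine tendsto_integral_of_dominated_convergence (fun x => C * ‖φ x‖)
        (fun n => ((hmeas n).mul φcont.measurable).aestronglyMeasurable)
        (hφint.norm.const_mul C)
        (fun n => Eventually.of_forall fun x => ?_)
        (Eventually.of_forall fun x => (hg x).mul_const _)
      rw [norm_mul]
      refine mul_le_mul_of_nonneg_right ?_ (norm_nonneg _)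
      rw [Real.norm_eq_abs, abs_of_nonneg (hnonneg n x)]
      exact hC n x
    rw [hνdef, integral_wd hgm hg0 φ]
    exact tendsto_nhds_unique T1 T2
  -- cutoff functions
  set χ : ℕ → EuclideanSpace ℝ (Fin d) → ℝ :=
    fun k x => max 0 (min 1 ((k : ℝ) + 1 - ‖x‖)) with hχdef
  have χcont : ∀ k, Continuous (χ k) := fun k =>
    continuous_const.max (continuous_const.min (continuous_const.sub continuous_norm))
  have χcs : ∀ k, HasCompactSupport (χ k) := by
    intro k
    refine HasCompactSupport.intro
      (isCompact_closedBall (0 : EuclideanSpace ℝ (Fin d)) ((k : ℝ) + 1)) ?_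
    intro x hx
    rw [mem_closedBall_zero_iff, not_le] at hx
    have h0 : (k : ℝ) + 1 - ‖x‖ ≤ 0 := by linarith
    simp only [hχdef]
    rw [max_eq_left (le_trans (min_le_right _ _) h0)]
  have χ0 : ∀ k x, 0 ≤ χ k x := fun k x => le_max_left _ _
  have χ1 : ∀ k x, χ k x ≤ 1 := fun k x => max_le zero_le_one (min_le_left _ _)
  have χlim : ∀ x, Tendsto (fun k => χ k x) atTop (𝓝 1) := by
    intro x
    obtain ⟨K, hK⟩ := exists_nat_ge ‖x‖
    refine tendsto_const_nhds.congr' ?_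
    filter_upwards [eventually_ge_atTop K] with k hk
    have hkk : (K : ℝ) ≤ (k : ℝ) := Nat.cast_le.mpr hk
    have h1 : (1 : ℝ) ≤ (k : ℝ) + 1 - ‖x‖ := by linarith
    simp only [hχdef]
    rw [min_eq_left h1, max_eq_right zero_le_one]
  -- integrals against bounded continuous functions agree
  have hBCF : ∀ h : EuclideanSpace ℝ (Fin d) →ᵇ ℝ, ∫ x, h x ∂ν = ∫ x, h x ∂μ := by
    intro h
    have key : ∀ (ρ : Measure (EuclideanSpace ℝ (Fin d))), IsFiniteMeasure ρ →
        Tendsto (fun k : ℕ => ∫ x, h x * χ k x ∂ρ) atTop (𝓝 (∫ x, h x ∂ρ)) := by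
      intro ρ hρ
      refine tendsto_integral_of_dominated_convergence (fun _ => ‖h‖)
        (fun k => (h.continuous.mul (χcont k)).aestronglyMeasurable)
        (integrable_const _)
        (fun k => Eventually.of_forall fun x => ?_)
        (Eventually.of_forall fun x => ?_)
      · rw [norm_mul]
        have hn1 : ‖χ k x‖ ≤ 1 := by
          rw [Real.norm_eq_abs, abs_of_nonneg (χ0 k x)]; exact χ1 k x
        calc ‖h x‖ * ‖χ k x‖ ≤ ‖h‖ * 1 :=
              mul_le_mul (h.norm_coe_le_norm x) hn1 (norm_nonneg _) (norm_nonneg _)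
          _ = ‖h‖ := mul_one _
      · simpa using (χlim x).const_mul (h x)
    have e1 := key ν inferInstance
    have e2 := key μ inferInstance
    have eq_k : ∀ k, ∫ x, h x * χ k x ∂ν = ∫ x, h x * χ k x ∂μ := by
      intro k
      exact hCc _ (h.continuous.mul (χcont k)) ((χcs k).mul_left)
    have e1' : Tendsto (fun k : ℕ => ∫ x, h x * χ k x ∂μ) atTop (𝓝 (∫ x, h x ∂ν)) := by
      simpa only [eq_k] using e1
    exact tendsto_nhds_unique e1' e2
  -- the measures are equal
  have hνμ : ν = μ := by
    refine ext_of_forall_lintegral_eq_of_IsFiniteMeasure ?_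
    intro F
    have hb : ∀ x, ‖((F x : ℝ))‖ ≤ (nndist F 0 : ℝ) := by
      intro x
      rw [Real.norm_eq_abs, abs_of_nonneg (F x).coe_nonneg]
      exact_mod_cast BoundedContinuousFunction.NNReal.upper_bound F x
    set h : EuclideanSpace ℝ (Fin d) →ᵇ ℝ :=
      BoundedContinuousFunction.ofNormedAddCommGroup (fun x => ((F x : ℝ)))
        (NNReal.continuous_coe.comp F.continuous) _ hb with hhdef
    have hint : ∫ x, ((F x : ℝ)) ∂ν = ∫ x, ((F x : ℝ)) ∂μ := hBCF h
    have l1 : (∫⁻ x, (F x : ℝ≥0∞) ∂ν).toReal = (∫⁻ x, (F x : ℝ≥0∞) ∂μ).toReal := by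
      rw [BoundedContinuousFunction.toReal_lintegral_coe_eq_integral,
        BoundedContinuousFunction.toReal_lintegral_coe_eq_integral]
      exact hint
    exact (ENNReal.toReal_eq_toReal_iff'
      (BoundedContinuousFunction.lintegral_lt_top_of_nnreal ν F).ne
      (BoundedContinuousFunction.lintegral_lt_top_of_nnreal μ F).ne).mp l1
  -- g integrates to 1
  have hg1 : ∫ x, g x = 1 := by
    have huniv : ν Set.univ = 1 := by rw [hνμ]; exact measure_univ
    rw [hνdef, withDensity_apply _ MeasurableSet.univ, Measure.restrict_univ] at huniv
    rw [integral_eq_lintegral_of_nonneg_ae (Eventually.of_forall hg0)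
      hgm.aestronglyMeasurable, huniv, ENNReal.toReal_one]
  -- Scheffé via dominated convergence
  have hmax_int : ∀ n, Integrable (fun x => max (g x - f n x) 0) :=
    fun n => (hgint.sub (hfint n)).pos_part
  have habs_int : ∀ n, Integrable (fun x => |f n x - g x|) :=
    fun n => ((hfint n).sub hgint).abs
  have key : ∀ n, ∫ x, |f n x - g x| = 2 * ∫ x, max (g x - f n x) 0 := by
    intro n
    have hpt : ∀ x, |f n x - g x| = (f n x - g x) + 2 * max (g x - f n x) 0 := by
      intro x; rcases le_total (f n x) (g x) with h | h
      · rw [abs_of_nonpos (by linarith), max_eq_left (by linarith)]; ring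
      · rw [abs_of_nonneg (by linarith), max_eq_right (by linarith)]; ring
    calc ∫ x, |f n x - g x|
        = ∫ x, ((f n x - g x) + 2 * max (g x - f n x) 0) :=
          integral_congr_ae (Eventually.of_forall hpt)
      _ = (∫ x, (f n x - g x)) + ∫ x, 2 * max (g x - f n x) 0 :=
          integral_add ((hfint n).sub hgint) ((hmax_int n).const_mul 2)
      _ = 2 * ∫ x, max (g x - f n x) 0 := by
          rw [integral_sub (hfint n) hgint, hprob n, hg1, integral_const_mul]; ring
  have T0 : Tendsto (fun n => ∫ x, max (g x - f n x) 0) atTop (𝓝 0) := by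
    have h0 : Tendsto (fun n => ∫ x, max (g x - f n x) 0) atTop
        (𝓝 (∫ _ : EuclideanSpace ℝ (Fin d), (0 : ℝ))) := by
      refine tendsto_integral_of_dominated_convergence g
        (fun n => (hmax_int n).aestronglyMeasurable) hgint
        (fun n => Eventually.of_forall fun x => ?_)
        (Eventually.of_forall fun x => ?_)
      · rw [Real.norm_eq_abs, abs_of_nonneg (le_max_right _ _)]
        exact max_le (by linarith [hnonneg n x]) (hg0 x)
      · have := (tendsto_const_nhds (x := g x) (f := atTop)).sub (hg x)
        have := this.max (tendsto_const_nhds (x := (0:ℝ)))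
        simpa using this
    simpa using h0
  have hA : Tendsto (fun n => ∫ x, |f n x - g x|) atTop (𝓝 0) := by
    have h2 := T0.const_mul 2
    simp only [mul_zero] at h2
    simp only [key]
    exact h2
  -- total variation bound
  have habs_le : ∀ n (B : Set (EuclideanSpace ℝ (Fin d))),
      |((μn n) B).toReal - (μ B).toReal| ≤ ∫ x, |f n x - g x| := by
    intro n B
    obtain ⟨t, hBt, htm, ht⟩ := exists_measurable_superset_forall_eq
      (fun b : Bool => if b then μn n else μ) B
    have htn : (μn n) t = (μn n) B := by simpa using ht true
    have htμ : μ t = μ B := by simpa using ht false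
    have e1 : ((μn n) B).toReal = ∫ x in t, f n x := by
      have hwd : (μn n) t = ENNReal.ofReal (∫ x in t, f n x) := by
        rw [hμn]
        rw [withDensity_apply _ htm,
          ← ofReal_integral_eq_lintegral_ofReal ((hfint n).integrableOn)
            (Eventually.of_forall (hnonneg n))]
      rw [← htn, hwd, ENNReal.toReal_ofReal (integral_nonneg (fun x => hnonneg n x))]
    have e2 : (μ B).toReal = ∫ x in t, g x := by
      have hwd : ν t = ENNReal.ofReal (∫ x in t, g x) := by
        rw [hνdef]
        rw [withDensity_apply _ htm,
          ← ofReal_integral_eq_lintegral_ofReal (hgint.integrableOn)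
            (Eventually.of_forall hg0)]
      rw [← htμ, ← hνμ, hwd, ENNReal.toReal_ofReal (integral_nonneg (fun x => hg0 x))]
    rw [e1, e2, ← integral_sub ((hfint n).integrableOn) (hgint.integrableOn)]
    calc |∫ x in t, (f n x - g x)| ≤ ∫ x in t, |f n x - g x| := by
          simpa [Real.norm_eq_abs] using
            norm_integral_le_integral_norm (μ := volume.restrict t) (fun x => f n x - g x)
      _ ≤ ∫ x, |f n x - g x| :=
          integral_mono_measure Measure.restrict_le_self
            (Eventually.of_forall fun x => abs_nonneg _) (habs_int n)
  have hfin : Tendsto (fun n => 2 * ∫ x, |f n x - g x|) atTop (𝓝 0) := by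
    have := hA.const_mul 2
    simpa using this
  refine squeeze_zero (g := fun n => 2 * ∫ x, |f n x - g x|) (fun n => ?_) (fun n => ?_) hfin
  · exact mul_nonneg (by norm_num) (Real.iSup_nonneg fun B => abs_nonneg _)
  · show dTV (μn n) μ ≤ 2 * ∫ x, |f n x - g x|
    refine mul_le_mul_of_nonneg_left ?_ (by norm_num)
    exact Real.iSup_le (fun B => habs_le n B)
      (integral_nonneg fun x => abs_nonneg _)
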